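/- For every integer p ≥ 0, there exists a feasible preemptive two-machine schedule of J_p in which a_4^p completes exactly at time 2p + 3 - 1/2^{p+1}. -/

import Mathlib

open MeasureTheory

/-- Jobs of the instance `J_p`: the job `(i, j)` is `a_{j+1}^i`, a unit job; in
particular `(i, 3)` is the job `a_4^i`. -/
abbrev JobP (p : ℕ) := Fin (p + 1) × Fin 4

/-- Release dates: `r(a_j^i) = 2i` for `j ∈ {1,2,3}` and `r(a_4^i) = 2i + 1`. -/
def relDate {p : ℕ} (a : JobP p) : ℝ :=
  if a.2 = 3 then 2 * ((a.1 : ℕ) : ℝ) + 1 else 2 * ((a.1 : ℕ) : ℝ)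

/-- Precedences: `a_j^i ≺ a_4^i` for `j ∈ {1,2,3}` and `a_4^i ≺ a_4^(i+1)`. -/
def Prec {p : ℕ} (a b : JobP p) : Prop :=
  (a.1 = b.1 ∧ a.2 ≠ 3 ∧ b.2 = 3) ∨ (a.2 = 3 ∧ b.2 = 3 ∧ (a.1 : ℕ) + 1 = (b.1 : ℕ))

/-- A feasible preemptive two-machine schedule of `J_p`: `S a` is the set of times
at which the unit job `a` executes; release dates are respected, each job executes
for total time `1`, at most two jobs execute at any instant, and no job executes
before one of its predecessors has completed. -/
def FeasibleP {p : ℕ} (S : JobP p → Set ℝ) : Prop :=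
  (∀ a, MeasurableSet (S a)) ∧
  (∀ a, S a ⊆ Set.Ici (relDate a)) ∧
  (∀ a, volume (S a) = 1) ∧
  (∀ t : ℝ, {a | t ∈ S a}.ncard ≤ 2) ∧
  (∀ a b, Prec a b → ∀ s ∈ S a, ∀ t ∈ S b, s ≤ t)

/-! ### Construction -/

noncomputable section

/-- `ee i = 2^{-i}`. -/
def ee (i : ℕ) : ℝ := (1/2 : ℝ) ^ i

lemma ee_pos (i : ℕ) : 0 < ee i := pow_pos (by norm_num) i

lemma ee_le_one (i : ℕ) : ee i ≤ 1 :=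
  pow_le_one₀ (by norm_num) (by norm_num)

lemma ee_succ (i : ℕ) : ee (i + 1) = ee i / 2 := by
  simp [ee, pow_succ]; ring

/-- Start of the two-machine phase of block `i`. -/
def Mb (i : ℕ) : ℝ := 2 * i + 1 - ee i

/-- Start of job `a_4^i`. -/
def Rb (i : ℕ) : ℝ := 2 * i + 2 - ee i / 2

/-- The schedule. -/
def sched (p : ℕ) (a : JobP p) : Set ℝ :=
  if a.2 = 0 then Set.Ico (Mb a.1) (Mb a.1 + 1)
  else if a.2 = 1 then
    Set.Ico (Mb a.1) (Rb a.1 - ee a.1) ∪ Set.Ico (Mb a.1 + 1) (Rb a.1)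
  else if a.2 = 2 then
    Set.Ico ((2 * (a.1 : ℕ) : ℝ)) (Mb a.1) ∪ Set.Ico (Rb a.1 - ee a.1) (Rb a.1)
  else Set.Ico (Rb a.1) (Rb a.1 + 1)

lemma ico_disj {a b c d : ℝ} (h : b ≤ c) :
    Disjoint (Set.Ico a b) (Set.Ico c d) :=
  Set.disjoint_left.mpr fun u hu hu' => absurd hu'.1 (not_le.2 (lt_of_lt_of_le hu.2 h))

lemma mem0 {p : ℕ} {a : JobP p} {t : ℝ} (h : a.2 = 0) (ht : t ∈ sched p a) :
    t ∈ Set.Ico (Mb a.1) (Mb a.1 + 1) := by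
  simpa [sched, h] using ht

lemma mem1 {p : ℕ} {a : JobP p} {t : ℝ} (h : a.2 = 1) (ht : t ∈ sched p a) :
    t ∈ Set.Ico (Mb a.1) (Rb a.1 - ee a.1) ∪ Set.Ico (Mb a.1 + 1) (Rb a.1) := by
  simpa [sched, h] using ht

lemma mem2 {p : ℕ} {a : JobP p} {t : ℝ} (h : a.2 = 2) (ht : t ∈ sched p a) :
    t ∈ Set.Ico ((2 * (a.1 : ℕ) : ℝ)) (Mb a.1) ∪ Set.Ico (Rb a.1 - ee a.1) (Rb a.1) := by
  simpa [sched, h] using ht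

lemma mem3 {p : ℕ} {a : JobP p} {t : ℝ} (h : a.2 = 3) (ht : t ∈ sched p a) :
    t ∈ Set.Ico (Rb a.1) (Rb a.1 + 1) := by
  simpa [sched, h] using ht

lemma jcases (j : Fin 4) : j = 0 ∨ j = 1 ∨ j = 2 ∨ j = 3 := by
  fin_cases j <;> simp

/-- lower bound on execution times -/
lemma sched_lo {p : ℕ} {a : JobP p} {t : ℝ} (ht : t ∈ sched p a) :
    (2 * (a.1 : ℕ) : ℝ) ≤ t := by
  have h1 := ee_pos (a.1 : ℕ)
  have h2 := ee_le_one (a.1 : ℕ)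
  rcases jcases a.2 with h | h | h | h
  · have := mem0 h ht; simp [Mb] at this ⊢; linarith [this.1]
  · rcases mem1 h ht with h' | h' <;> (simp [Mb] at h' ⊢; linarith [h'.1])
  · rcases mem2 h ht with h' | h' <;> (simp [Mb, Rb] at h' ⊢; linarith [h'.1])
  · have := mem3 h ht; simp [Rb] at this ⊢; linarith [this.1]

/-- non-`a_4` jobs finish before `Rb`. -/
lemma sched_hi {p : ℕ} {a : JobP p} {t : ℝ} (h3 : a.2 ≠ 3) (ht : t ∈ sched p a) :
    t < Rb (a.1 : ℕ) := by
  have h1 := ee_pos (a.1 : ℕ)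
  rcases jcases a.2 with h | h | h | h
  · have := mem0 h ht; simp [Mb, Rb] at this ⊢; linarith [this.2]
  · rcases mem1 h ht with h' | h' <;> (simp [Mb, Rb] at h' ⊢; linarith [h'.2])
  · rcases mem2 h ht with h' | h' <;> (simp [Mb, Rb] at h' ⊢; linarith [h'.2])
  · exact absurd h h3

lemma Rb_lt {i : ℕ} : Rb i < 2 * i + 2 := by
  have := ee_pos i; simp [Rb]; linarith

lemma Mb_ge {i : ℕ} : (2 * i : ℝ) ≤ Mb i := by
  have := ee_le_one i; simp [Mb]; linarith

/-- jobs `a_1, a_2` start after `Mb`. -/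
lemma sched_lo01 {p : ℕ} {a : JobP p} {t : ℝ} (h : a.2 = 0 ∨ a.2 = 1)
    (ht : t ∈ sched p a) : Mb (a.1 : ℕ) ≤ t := by
  have h1 := ee_pos (a.1 : ℕ)
  rcases h with h | h
  · exact (mem0 h ht).1
  · rcases mem1 h ht with h' | h'
    · exact h'.1
    · linarith [h'.1]

/-- two distinct non-`a_4` jobs running at the same time are in the same block,
after the `Mb` point of the block. -/
lemma lemA {p : ℕ} {a b : JobP p} {t : ℝ} (hab : a ≠ b) (ha : a.2 ≠ 3) (hb : b.2 ≠ 3)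
    (hta : t ∈ sched p a) (htb : t ∈ sched p b) :
    a.1 = b.1 ∧ Mb (a.1 : ℕ) ≤ t := by
  have hblock : a.1 = b.1 := by
    have l1 := sched_lo hta
    have l2 := sched_lo htb
    have u1 : t < 2 * (a.1 : ℕ) + 2 := lt_trans (sched_hi ha hta) Rb_lt
    have u2 : t < 2 * (b.1 : ℕ) + 2 := lt_trans (sched_hi hb htb) Rb_lt
    have : ((a.1 : ℕ) : ℝ) < (b.1 : ℕ) + 1 := by linarith
    have h1 : (a.1 : ℕ) < (b.1 : ℕ) + 1 := by exact_mod_cast this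
    have : ((b.1 : ℕ) : ℝ) < (a.1 : ℕ) + 1 := by linarith
    have h2 : (b.1 : ℕ) < (a.1 : ℕ) + 1 := by exact_mod_cast this
    have : (a.1 : ℕ) = (b.1 : ℕ) := by omega
    exact Fin.ext this
  refine ⟨hblock, ?_⟩
  -- at least one of a, b has j ∈ {0,1}
  have hj : a.2 ≠ b.2 := fun h => hab (Prod.ext hblock h)
  rcases jcases a.2 with h | h | h | h
  · exact sched_lo01 (Or.inl h) hta
  · exact sched_lo01 (Or.inr h) hta
  · -- a is a_3; then b is a_1 or a_2
    have : Mb (b.1 : ℕ) ≤ t := by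
      rcases jcases b.2 with h' | h' | h' | h'
      · exact sched_lo01 (Or.inl h') htb
      · exact sched_lo01 (Or.inr h') htb
      · exact absurd (h.trans h'.symm) hj
      · exact absurd h' hb
    rwa [hblock]
  · exact absurd h ha

/-- two distinct `a_4` jobs never run at the same time. -/
lemma lemT1 {p : ℕ} {a b : JobP p} {t : ℝ} (hab : a ≠ b) (ha : a.2 = 3) (hb : b.2 = 3)
    (hta : t ∈ sched p a) (htb : t ∈ sched p b) : False := by
  have key : ∀ i i' : ℕ, i < i' → t ∈ Set.Ico (Rb i) (Rb i + 1) →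
      t ∈ Set.Ico (Rb i') (Rb i' + 1) → False := by
    intro i i' hii h1 h2
    have hc : (i : ℝ) + 1 ≤ i' := by exact_mod_cast hii
    have e1 := ee_pos i
    have e2 := ee_le_one i'
    simp [Rb] at h1 h2
    linarith [h1.2, h2.1]
  have hne : (a.1 : ℕ) ≠ (b.1 : ℕ) := by
    intro h
    exact hab (Prod.ext (Fin.ext h) (ha.trans hb.symm))
  rcases lt_or_gt_of_ne hne with h | h
  · exact key _ _ h (mem3 ha hta) (mem3 hb htb)
  · exact key _ _ h (mem3 hb htb) (mem3 ha hta)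

/-- no `a_4` job runs in `[Mb i, Rb i)`. -/
lemma lemK5 {p : ℕ} {c : JobP p} {i : ℕ} {t : ℝ} (hc : c.2 = 3)
    (htc : t ∈ sched p c) (h1 : Mb i ≤ t) (h2 : t < Rb i) : False := by
  have h3 := mem3 hc htc
  rcases Set.mem_Ico.1 h3 with ⟨l3, u3⟩
  have e1 := ee_pos i
  have e2 := ee_le_one i
  have e3 := ee_pos (c.1 : ℕ)
  have e4 := ee_le_one (c.1 : ℕ)
  rcases Nat.lt_trichotomy (c.1 : ℕ) i with h | h | h
  · rcases Nat.lt_or_ge ((c.1 : ℕ) + 1) i with h5 | h5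
    · -- (c.1) + 2 ≤ i
      have : (((c.1 : ℕ) : ℝ)) + 2 ≤ i := by exact_mod_cast h5
      simp [Mb, Rb] at h1 u3
      linarith
    · -- i = (c.1) + 1
      have hi : i = (c.1 : ℕ) + 1 := by omega
      simp [Mb, Rb, hi] at h1 u3
      rw [ee_succ] at h1
      push_cast at h1 u3
      linarith
  · -- same block
    rw [h] at l3; linarith
  · -- i < (c.1)
    have : ((i : ℝ)) + 1 ≤ (c.1 : ℕ) := by exact_mod_cast h
    simp [Rb] at h2 l3
    linarith

/-- `a_1, a_2, a_3` of the same block never all run at the same time. -/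
lemma lemK3 {i : ℕ} {t : ℝ}
    (h0 : t ∈ Set.Ico (Mb i) (Mb i + 1))
    (h1 : t ∈ Set.Ico (Mb i) (Rb i - ee i) ∪ Set.Ico (Mb i + 1) (Rb i))
    (h2 : t ∈ Set.Ico ((2 * i : ℝ)) (Mb i) ∪ Set.Ico (Rb i - ee i) (Rb i)) :
    False := by
  rcases Set.mem_Ico.1 h0 with ⟨l0, u0⟩
  rcases h2 with h2 | h2
  · exact absurd (Set.mem_Ico.1 h2).2 (not_lt.2 l0)
  · have l2 := (Set.mem_Ico.1 h2).1
    rcases h1 with h1 | h1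
    · exact absurd (Set.mem_Ico.1 h1).2 (not_lt.2 l2)
    · exact absurd (Set.mem_Ico.1 h1).1 (not_le.2 u0)

lemma lemK3' {p : ℕ} {t : ℝ} {x1 : Fin (p+1)} {x2 y2 z2 : Fin 4}
    (hx : x2 = 0) (hy : y2 = 1) (hz : z2 = 2)
    (tx : t ∈ sched p (x1, x2)) (ty : t ∈ sched p (x1, y2))
    (tz : t ∈ sched p (x1, z2)) : False := by
  have h0 := mem0 hx tx
  have h1 := mem1 hy ty
  have h2 := mem2 hz tz
  exact lemK3 (i := (x1 : ℕ)) h0 h1 h2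

/-- at most two jobs run at any instant. -/
lemma sched_ncard {p : ℕ} (t : ℝ) : {a : JobP p | t ∈ sched p a}.ncard ≤ 2 := by
  by_contra hcon
  push_neg at hcon
  obtain ⟨u, hu, hcard⟩ := Set.exists_subset_card_eq (n := 3) hcon
  obtain ⟨x, y, z, hxy, hxz, hyz, rfl⟩ := Set.ncard_eq_three.1 hcard
  have tx : t ∈ sched p x := hu (by simp)
  have ty : t ∈ sched p y := hu (by simp)
  have tz : t ∈ sched p z := hu (by simp)
  -- helper for the "two non-a4 + one a4" case
  have lemB : ∀ a b c : JobP p, a ≠ b → a.2 ≠ 3 → b.2 ≠ 3 → c.2 = 3 →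
      t ∈ sched p a → t ∈ sched p b → t ∈ sched p c → False := by
    intro a b c hab ha hb hc hta htb htc
    obtain ⟨_, hM⟩ := lemA hab ha hb hta htb
    exact lemK5 hc htc hM (sched_hi ha hta)
  by_cases h3x : x.2 = 3 <;> by_cases h3y : y.2 = 3 <;> by_cases h3z : z.2 = 3
  · exact lemT1 hxy h3x h3y tx ty
  · exact lemT1 hxy h3x h3y tx ty
  · exact lemT1 hxz h3x h3z tx tz
  · exact lemB y z x hyz h3y h3z h3x ty tz tx
  · exact lemT1 hyz h3y h3z ty tz
  · exact lemB x z y hxz h3x h3z h3y tx tz ty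
  · exact lemB x y z hxy h3x h3y h3z tx ty tz
  · -- all three are non-a4 jobs of the same block: use lemK3
    obtain ⟨hbxy, _⟩ := lemA hxy h3x h3y tx ty
    obtain ⟨hbxz, _⟩ := lemA hxz h3x h3z tx tz
    have hjxy : x.2 ≠ y.2 := fun h => hxy (Prod.ext hbxy h)
    have hjxz : x.2 ≠ z.2 := fun h => hxz (Prod.ext hbxz h)
    have hjyz : y.2 ≠ z.2 := fun h => hyz (Prod.ext (hbxy.symm.trans hbxz) h)
    obtain ⟨x1, x2⟩ := x
    obtain ⟨y1, y2⟩ := y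
    obtain ⟨z1, z2⟩ := z
    replace hbxy : x1 = y1 := hbxy
    replace hbxz : x1 = z1 := hbxz
    subst hbxy
    subst hbxz
    replace hjxy : x2 ≠ y2 := hjxy
    replace hjxz : x2 ≠ z2 := hjxz
    replace hjyz : y2 ≠ z2 := hjyz
    replace h3x : x2 ≠ 3 := h3x
    replace h3y : y2 ≠ 3 := h3y
    replace h3z : z2 ≠ 3 := h3z
    rcases jcases x2 with hx | hx | hx | hx <;>
      rcases jcases y2 with hy | hy | hy | hy <;>
        rcases jcases z2 with hz | hz | hz | hz <;>
          first
          | exact hjxy (hx.trans hy.symm)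
          | exact hjxz (hx.trans hz.symm)
          | exact hjyz (hy.trans hz.symm)
          | exact h3x hx
          | exact h3y hy
          | exact h3z hz
          | exact lemK3' hx hy hz tx ty tz
          | exact lemK3' hx hz hy tx tz ty
          | exact lemK3' hy hx hz ty tx tz
          | exact lemK3' hy hz hx ty tz tx
          | exact lemK3' hz hx hy tz tx ty
          | exact lemK3' hz hy hx tz ty tx

end

/-- There is a feasible preemptive two-machine schedule of `J_p` in which `a_4^p`
completes exactly at time `2p + 3 - 1/2^(p+1)`. -/
theorem a4p_completion_achieved (p : ℕ) :
    ∃ S : JobP p → Set ℝ, FeasibleP S ∧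
      sSup (S (Fin.last p, 3)) = 2 * (p : ℝ) + 3 - 1 / 2 ^ (p + 1) := by
  refine ⟨sched p, ⟨?_, ?_, ?_, sched_ncard, ?_⟩, ?_⟩
  · -- measurability
    intro a
    unfold sched
    split_ifs <;>
      first
      | exact measurableSet_Ico
      | exact (measurableSet_Ico).union measurableSet_Ico
  · -- release dates
    intro a t ht
    have l := sched_lo ht
    rcases jcases a.2 with h | h | h | h
    · simp [relDate, h, Set.mem_Ici]; linarith
    · simp [relDate, h, Set.mem_Ici]; linarith
    · simp [relDate, h, Set.mem_Ici]; linarith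
    · have h3 := (mem3 h ht).1
      have e := ee_le_one (a.1 : ℕ)
      simp [relDate, h, Set.mem_Ici]
      simp [Rb] at h3
      linarith
  · -- volumes
    intro a
    have e1 := ee_pos (a.1 : ℕ)
    have e2 := ee_le_one (a.1 : ℕ)
    rcases jcases a.2 with h | h | h | h
    · simp [sched, h, Real.volume_Ico]
    · rw [show sched p a = Set.Ico (Mb a.1) (Rb a.1 - ee a.1) ∪
          Set.Ico (Mb a.1 + 1) (Rb a.1) by simp [sched, h]]
      rw [measure_union ?_ measurableSet_Ico, Real.volume_Ico, Real.volume_Ico,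
        ← ENNReal.ofReal_add (by simp [Mb, Rb]; linarith) (by simp [Mb, Rb]; linarith)]
      · rw [show (Rb (a.1:ℕ) - ee (a.1:ℕ) - Mb (a.1:ℕ)) + (Rb (a.1:ℕ) - (Mb (a.1:ℕ) + 1)) = 1 by
          simp [Mb, Rb]; ring]
        exact ENNReal.ofReal_one
      · exact ico_disj (by have := ee_pos (a.1 : ℕ); simp [Mb, Rb]; linarith)
    · rw [show sched p a = Set.Ico ((2 * (a.1 : ℕ) : ℝ)) (Mb a.1) ∪
          Set.Ico (Rb a.1 - ee a.1) (Rb a.1) by simp [sched, h]]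
      rw [measure_union (ico_disj (by simp [Mb, Rb]; linarith)) measurableSet_Ico,
        Real.volume_Ico, Real.volume_Ico,
        ← ENNReal.ofReal_add (by simp [Mb]; linarith) (by linarith)]
      rw [show (Mb (a.1:ℕ) - (2 * (a.1:ℕ) : ℝ)) + (Rb (a.1:ℕ) - (Rb (a.1:ℕ) - ee (a.1:ℕ))) = 1 by
          simp [Mb]; ring]
      exact ENNReal.ofReal_one
    · simp [sched, h, Real.volume_Ico]
  · -- precedences
    intro a b hab s hs t ht
    rcases hab with ⟨hb1, ha2, hb2⟩ | ⟨ha2, hb2, hb1⟩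
    · have h1 := sched_hi ha2 hs
      have h2 := (mem3 hb2 ht).1
      rw [hb1] at h1
      linarith
    · have h1 := (mem3 ha2 hs).2
      have h2 := (mem3 hb2 ht).1
      have key : Rb (a.1 : ℕ) + 1 ≤ Rb (b.1 : ℕ) := by
        rw [← hb1, Rb, Rb, ee_succ]
        have := ee_pos (a.1 : ℕ)
        push_cast
        linarith
      linarith
  · -- the sup
    have h3 : ((Fin.last p, 3) : JobP p).2 = 3 := rfl
    rw [show sched p (Fin.last p, 3) = Set.Ico (Rb ((Fin.last p : Fin (p+1)) : ℕ))
        (Rb ((Fin.last p : Fin (p+1)) : ℕ) + 1) by simp [sched]]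
    rw [csSup_Ico (by linarith)]
    rw [Fin.val_last, Rb, ee]
    rw [show ((1:ℝ)/2)^p = 1/2^p by rw [div_pow]; norm_num]
    field_simp
    ring
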